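/- Define polynomials X_k = 1 + Σ_{j=1}^{k} Π_{i=1}^{j} x_i^{2^(j-i)} and X̃_k = 1 + Σ_{j=1}^{k-1} Π_{i=1}^{j} x_i^{2^(j-i)} - Π_{i=1}^{k} x_i^{2^(k-i)} in variables x_1, x_2, .... Then for all n ≥ 1: X_n + x_{n+1}(X_{n-1}^2 - X_n·X̃_n) = X_{n+1} and X_n - x_{n+1}(X_{n-1}^2 - X_n·X̃_n) = X̃_{n+1}. -/
import Mathlib


variable {R : Type*} [CommRing R]

/-- `X k = 1 + ∑_{j=1}^k ∏_{i=1}^j x_i^{2^(j-i)}`. -/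
def Xpoly (x : ℕ → R) (k : ℕ) : R :=
  1 + ∑ j ∈ Finset.Icc 1 k, ∏ i ∈ Finset.Icc 1 j, x i ^ 2 ^ (j - i)

/-- `X̃ k = 1 + ∑_{j=1}^{k-1} ∏_{i=1}^j x_i^{2^(j-i)} - ∏_{i=1}^k x_i^{2^(k-i)}`. -/
def Xtilde (x : ℕ → R) (k : ℕ) : R :=
  1 + ∑ j ∈ Finset.Icc 1 (k - 1), ∏ i ∈ Finset.Icc 1 j, x i ^ 2 ^ (j - i)
    - ∏ i ∈ Finset.Icc 1 k, x i ^ 2 ^ (k - i)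

/-- aux product -/
def Ppoly (x : ℕ → R) (k : ℕ) : R := ∏ i ∈ Finset.Icc 1 k, x i ^ 2 ^ (k - i)

lemma Xpoly_step (x : ℕ → R) (m : ℕ) :
    Xpoly x (m + 1) = Xpoly x m + Ppoly x (m + 1) := by
  simp only [Xpoly, Ppoly, Finset.sum_Icc_succ_top (Nat.le_add_left 1 m)]
  ring

lemma Xtilde_eq (x : ℕ → R) (k : ℕ) :
    Xtilde x k = Xpoly x (k - 1) - Ppoly x k := by
  simp only [Xtilde, Xpoly, Ppoly]

lemma Ppoly_step (x : ℕ → R) (m : ℕ) :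
    Ppoly x (m + 1) = x (m + 1) * Ppoly x m ^ 2 := by
  have key : ∏ i ∈ Finset.Icc 1 m, x i ^ 2 ^ (m + 1 - i) = Ppoly x m ^ 2 := by
    rw [Ppoly, ← Finset.prod_pow]
    apply Finset.prod_congr rfl
    intro i hi
    rw [Finset.mem_Icc] at hi
    rw [← pow_mul]
    congr 1
    have : m + 1 - i = (m - i) + 1 := by omega
    rw [this, pow_succ]
  simp only [Ppoly, Finset.prod_Icc_succ_top (Nat.le_add_left 1 m), Nat.sub_self, pow_zero,
    pow_one] at *
  rw [key]; ring

theorem Xpoly_rec (x : ℕ → R) (n : ℕ) (hn : 1 ≤ n) :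
    Xpoly x n + x (n + 1) * (Xpoly x (n - 1) ^ 2 - Xpoly x n * Xtilde x n) = Xpoly x (n + 1) ∧
    Xpoly x n - x (n + 1) * (Xpoly x (n - 1) ^ 2 - Xpoly x n * Xtilde x n) = Xtilde x (n + 1) := by
  obtain ⟨m, rfl⟩ : ∃ m, n = m + 1 := ⟨n - 1, by omega⟩
  rw [Xtilde_eq x (m + 1), Xtilde_eq x (m + 1 + 1)]
  simp only [Nat.add_sub_cancel]
  rw [Xpoly_step x (m + 1), Ppoly_step x (m + 1), Xpoly_step x m]
  constructor <;> ring
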